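/- Lemma (chain-selection, quantitative form): Let α ∈ (0,1) and δ ∈ (0,1/2]. Let J be a finite set of jobs feasible on m machines, let j* be a job, and let S ⊆ J be a set of α-tight jobs each of which δ-dominates j*. Let j ∈ S be a job of maximum laxity in S, i.e., ℓ_{j'} ≤ ℓ_j for all j' ∈ S, and assume ℓ_j ≥ 1. Then the number of jobs j' ∈ S that are not dominated by j (i.e., with I(j') ⊄⊆ I(j)) is at most 16m/(αδ) + m/α. -/

import Mathlib

/-- A job given by integer release date `r`, deadline `d`, and processing time `p`. -/
structure Job where
  r : ℤ
  d : ℤ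
  p : ℤ
deriving DecidableEq

/-- A job is valid if `1 ≤ p` and `r + p ≤ d`. -/
def Job.valid (j : Job) : Prop := 1 ≤ j.p ∧ j.r + j.p ≤ j.d

/-- The interval `I(j) = {t ∈ ℤ : r ≤ t < d}` of a job. -/
noncomputable def Job.interval (j : Job) : Finset ℤ := Finset.Ico j.r j.d

/-- The laxity `ℓ_j = d - r - p` of a job. -/
def Job.lax (j : Job) : ℤ := j.d - j.r - j.p

/-- The contribution `C(j, I) = max {0, |I ∩ I(j)| - ℓ_j}` of a job to a finite set `I ⊆ ℤ`. -/
noncomputable def contribution (j : Job) (I : Finset ℤ) : ℤ :=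
  max 0 (((I ∩ j.interval).card : ℤ) - j.lax)

/-- A finite set of jobs `J` is feasible on `m` machines. -/
def Feasible (J : Finset Job) (m : ℕ) : Prop :=
  ∃ σ : ℤ → Finset Job,
    (∀ t, σ t ⊆ J) ∧
    (∀ t, (σ t).card ≤ m) ∧
    (∀ t, ∀ j ∈ σ t, j.r ≤ t ∧ t < j.d) ∧
    (∀ j ∈ J, ((Finset.Ico j.r j.d).filter (fun t => j ∈ σ t)).card = j.p.toNat)

/-- A job is `α`-tight if `p_j > α (d_j - r_j)`. -/
def AlphaTight (α : ℝ) (j : Job) : Prop := α * ((j.d : ℝ) - (j.r : ℝ)) < (j.p : ℝ)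

/-- The `β`-interval `I_β(j) = [r_j + βℓ_j, d_j - βℓ_j)` of a job (a real interval). -/
def betaInterval (β : ℝ) (j : Job) : Set ℝ :=
  Set.Ico ((j.r : ℝ) + β * (j.lax : ℝ)) ((j.d : ℝ) - β * (j.lax : ℝ))

/-- Two jobs are agreeable if `(r_j - r_{j'})·(d_j - d_{j'}) ≥ 0`. -/
def Agreeable (j j' : Job) : Prop :=
  0 ≤ ((j.r : ℝ) - (j'.r : ℝ)) * ((j.d : ℝ) - (j'.d : ℝ))

/-- Two jobs are `β`-agreeable if they are agreeable and their `β`-intervals intersect. -/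
def BetaAgreeable (β : ℝ) (j j' : Job) : Prop :=
  Agreeable j j' ∧ (betaInterval β j ∩ betaInterval β j').Nonempty

/-- `j` δ-dominates `j*`: `I(j*) ⊆ I(j)` (as integer intervals) and, viewing intervals
as real intervals, `[r_{j*}, d_{j*}) ∩ I_δ(j) ≠ ∅`. -/
def DeltaDominates (δ : ℝ) (j jstar : Job) : Prop :=
  jstar.interval ⊆ j.interval ∧
  (Set.Ico (jstar.r : ℝ) (jstar.d : ℝ) ∩ betaInterval δ j).Nonempty


lemma contribution_nonneg (j : Job) (I : Finset ℤ) : (0:ℤ) ≤ contribution j I :=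
  le_max_left _ _

lemma sum_contribution_le (J : Finset Job) (m : ℕ) (hJ : ∀ j ∈ J, j.valid)
    (hfeas : Feasible J m) (I : Finset ℤ) :
    ∑ j' ∈ J, contribution j' I ≤ (m : ℤ) * I.card := by
  classical
  obtain ⟨σ, hsub, hcard, hwin, hp⟩ := hfeas
  have hstep : ∀ j' ∈ J, contribution j' I ≤ ((I.filter (fun t => j' ∈ σ t)).card : ℤ) := by
    intro j' hj'
    have hv := hJ j' hj'
    set T := I.filter (fun t => j' ∈ σ t) with hT
    set A := (Finset.Ico j'.r j'.d).filter (fun t => j' ∈ σ t) with hA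
    have hAcard : A.card = j'.p.toNat := hp j' hj'
    have hsubA : A ⊆ (A ∩ I) ∪ ((Finset.Ico j'.r j'.d) \ I) := by
      intro t ht
      by_cases h : t ∈ I
      · exact Finset.mem_union_left _ (Finset.mem_inter.mpr ⟨ht, h⟩)
      · exact Finset.mem_union_right _ (Finset.mem_sdiff.mpr ⟨(Finset.mem_filter.mp ht).1, h⟩)
    have hAI : A ∩ I ⊆ T := by
      intro t ht
      rcases Finset.mem_inter.mp ht with ⟨ht1, ht2⟩
      exact Finset.mem_filter.mpr ⟨ht2, (Finset.mem_filter.mp ht1).2⟩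
    have h1 : A.card ≤ T.card + ((Finset.Ico j'.r j'.d) \ I).card := by
      calc A.card ≤ ((A ∩ I) ∪ ((Finset.Ico j'.r j'.d) \ I)).card :=
              Finset.card_le_card hsubA
        _ ≤ (A ∩ I).card + ((Finset.Ico j'.r j'.d) \ I).card := Finset.card_union_le _ _
        _ ≤ T.card + ((Finset.Ico j'.r j'.d) \ I).card :=
              Nat.add_le_add_right (Finset.card_le_card hAI) _
    have h2 : ((Finset.Ico j'.r j'.d) \ I).card + ((Finset.Ico j'.r j'.d) ∩ I).card
        = (Finset.Ico j'.r j'.d).card := Finset.card_sdiff_add_card_inter _ _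
    have hIco : ((Finset.Ico j'.r j'.d).card : ℤ) = j'.d - j'.r := by
      rw [Int.card_Ico]
      exact Int.toNat_of_nonneg (by have := hv.1; have := hv.2; linarith)
    have hpA : (A.card : ℤ) = j'.p := by
      rw [hAcard]; exact Int.toNat_of_nonneg (by have := hv.1; linarith)
    have hIinter : I ∩ j'.interval = (Finset.Ico j'.r j'.d) ∩ I := by
      rw [Job.interval, Finset.inter_comm]
    unfold contribution
    rw [hIinter]
    refine max_le (Int.natCast_nonneg _) ?_
    unfold Job.lax
    have h1' : (A.card : ℤ) ≤ (T.card : ℤ) + (((Finset.Ico j'.r j'.d) \ I).card : ℤ) := by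
      exact_mod_cast h1
    have h2' : (((Finset.Ico j'.r j'.d) \ I).card : ℤ)
        + (((Finset.Ico j'.r j'.d) ∩ I).card : ℤ) = ((Finset.Ico j'.r j'.d).card : ℤ) := by
      exact_mod_cast h2
    rw [hpA] at h1'
    linarith [hIco]
  have hsum : ∑ j' ∈ J, ((I.filter (fun t => j' ∈ σ t)).card : ℤ) ≤ (m : ℤ) * I.card := by
    have hswap : ∑ j' ∈ J, (I.filter (fun t => j' ∈ σ t)).card
        = ∑ t ∈ I, (J.filter (fun j' => j' ∈ σ t)).card := by
      simp only [Finset.card_filter]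
      exact Finset.sum_comm
    have hfil : ∀ t : ℤ, J.filter (fun j' => j' ∈ σ t) = σ t := by
      intro t
      ext j'
      simp only [Finset.mem_filter]
      exact ⟨fun h => h.2, fun h => ⟨hsub t h, h⟩⟩
    have : ∑ j' ∈ J, (I.filter (fun t => j' ∈ σ t)).card ≤ m * I.card := by
      rw [hswap]
      calc ∑ t ∈ I, (J.filter (fun j' => j' ∈ σ t)).card
          = ∑ t ∈ I, (σ t).card := by simp_rw [hfil]
        _ ≤ ∑ _t ∈ I, m := Finset.sum_le_sum (fun t _ => hcard t)
        _ = I.card * m := by rw [Finset.sum_const, smul_eq_mul]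
        _ = m * I.card := Nat.mul_comm _ _
    exact_mod_cast this
  calc ∑ j' ∈ J, contribution j' I ≤ ∑ j' ∈ J, ((I.filter (fun t => j' ∈ σ t)).card : ℤ) :=
        Finset.sum_le_sum hstep
    _ ≤ (m : ℤ) * I.card := hsum

lemma count_bound (J : Finset Job) (m : ℕ) (hJ : ∀ j ∈ J, j.valid)
    (hfeas : Feasible J m) (I : Finset ℤ) (S' : Finset Job) (hS' : S' ⊆ J)
    (c : ℝ) (hlb : ∀ j' ∈ S', c ≤ ((contribution j' I : ℤ) : ℝ)) :
    (S'.card : ℝ) * c ≤ (m : ℝ) * I.card := by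
  have h1 : (S'.card : ℝ) * c ≤ ∑ j' ∈ S', ((contribution j' I : ℤ) : ℝ) := by
    have := Finset.card_nsmul_le_sum S' (fun j' => ((contribution j' I : ℤ) : ℝ)) c hlb
    simpa [nsmul_eq_mul] using this
  have h2 : ∑ j' ∈ S', ((contribution j' I : ℤ) : ℝ)
      ≤ ∑ j' ∈ J, ((contribution j' I : ℤ) : ℝ) := by
    refine Finset.sum_le_sum_of_subset_of_nonneg hS' (fun i _ _ => ?_)
    exact_mod_cast contribution_nonneg i I
  have h3 : ∑ j' ∈ J, ((contribution j' I : ℤ) : ℝ) ≤ (m : ℝ) * I.card := by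
    have := sum_contribution_le J m hJ hfeas I
    exact_mod_cast this
  linarith


/-- chain-selection, quantitative form: if every job of `S ⊆ J` is
α-tight and δ-dominates `j*`, and `j ∈ S` has maximum laxity in `S` with `ℓ_j ≥ 1`,
then at most `16m/(αδ) + m/α` jobs of `S` are not dominated by `j`. -/
theorem chain_selection_bound
    (α δ : ℝ) (hα : α ∈ Set.Ioo (0 : ℝ) 1) (hδ : δ ∈ Set.Ioc (0 : ℝ) (1 / 2))
    (J : Finset Job) (hJ : ∀ j ∈ J, j.valid) (m : ℕ) (hfeas : Feasible J m)
    (jstar : Job) (hjs : jstar.valid)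
    (S : Finset Job) (hS : S ⊆ J)
    (htight : ∀ j ∈ S, AlphaTight α j)
    (hdom : ∀ j ∈ S, DeltaDominates δ j jstar)
    (j : Job) (hjS : j ∈ S) (hmax : ∀ j' ∈ S, j'.lax ≤ j.lax) (hlax : 1 ≤ j.lax) :
    ({j' : Job | j' ∈ S ∧ ¬ j'.interval ⊆ j.interval}.ncard : ℝ)
        ≤ 16 * (m : ℝ) / (α * δ) + (m : ℝ) / α := by
  classical
  obtain ⟨hα0, hα1⟩ := hα
  obtain ⟨hδ0, hδ2⟩ := hδ
  set L : ℤ := j.lax with hLdef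
  have hL1 : (1:ℤ) ≤ L := hlax
  have hL' : (1:ℝ) ≤ (L:ℝ) := by exact_mod_cast hL1
  have hstar : jstar.r < jstar.d := by
    have h1 := hjs.1; have h2 := hjs.2; linarith
  have hαδ : α * δ < 1 := by nlinarith
  have hm0 : (0:ℝ) ≤ (m:ℝ) := Nat.cast_nonneg m
  set N : Finset Job := S.filter (fun j' => ¬ j'.interval ⊆ j.interval) with hN
  have hset : {j' : Job | j' ∈ S ∧ ¬ j'.interval ⊆ j.interval} = (N : Set Job) := by
    ext j'; simp [hN]
  rw [hset, Set.ncard_coe_finset]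
  have hNJ : N ⊆ J := fun j' hj' => hS (Finset.mem_filter.mp hj').1
  obtain ⟨hjsubJ, x, hx⟩ := hdom j hjS
  simp only [betaInterval, Set.mem_inter_iff, Set.mem_Ico] at hx
  obtain ⟨⟨hx1, hx2⟩, hx3, hx4⟩ := hx
  have hA : (j.r : ℝ) + δ * (L:ℝ) < (jstar.d : ℝ) := by
    rw [hLdef]; linarith
  have hB : (jstar.r : ℝ) < (j.d : ℝ) - δ * (L:ℝ) := by
    rw [hLdef]; linarith
  have facts : ∀ j' ∈ N, j'.r ≤ jstar.r ∧ jstar.d ≤ j'.d ∧ j'.lax ≤ L ∧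
      α * ((j'.d : ℝ) - (j'.r : ℝ)) < (j'.p : ℝ) ∧ δ * (L:ℝ) < (j'.d : ℝ) - (j'.r : ℝ) := by
    intro j' hj'
    have hj'S : j' ∈ S := (Finset.mem_filter.mp hj').1
    have hbad : ¬ j'.interval ⊆ j.interval := (Finset.mem_filter.mp hj').2
    have hsubi := (hdom j' hj'S).1
    rw [Job.interval, Job.interval] at hsubi
    have hrd := (Finset.Ico_subset_Ico_iff hstar).mp hsubi
    have hor : j'.r < j.r ∨ j.d < j'.d := by
      by_contra h
      push_neg at h
      exact hbad (by rw [Job.interval, Job.interval]; exact Finset.Ico_subset_Ico h.1 h.2)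
    refine ⟨hrd.1, hrd.2, hmax j' hj'S, htight j' hj'S, ?_⟩
    rcases hor with h | h
    · have h' : (j'.r : ℝ) < (j.r : ℝ) := by exact_mod_cast h
      have h2 : (jstar.d : ℝ) ≤ (j'.d : ℝ) := by exact_mod_cast hrd.2
      linarith
    · have h' : (j.d : ℝ) < (j'.d : ℝ) := by exact_mod_cast h
      have h2 : (j'.r : ℝ) ≤ (jstar.r : ℝ) := by exact_mod_cast hrd.1
      linarith
  by_cases hcase : jstar.d - jstar.r ≤ 2 * L
  · -- small j* interval: use I = [r* - 2L, d* + 2L)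
    set I : Finset ℤ := Finset.Ico (jstar.r - 2*L) (jstar.d + 2*L) with hI
    have hIcard : (I.card : ℝ) = ((jstar.d : ℝ) - jstar.r) + 4*(L:ℝ) := by
      have hnn : (0:ℤ) ≤ jstar.d + 2*L - (jstar.r - 2*L) := by linarith
      have h : (I.card : ℤ) = jstar.d + 2*L - (jstar.r - 2*L) := by
        rw [hI, Int.card_Ico]; exact Int.toNat_of_nonneg hnn
      have h' : (I.card : ℝ) = ((jstar.d + 2*L - (jstar.r - 2*L) : ℤ) : ℝ) := by
        exact_mod_cast h
      rw [h']; push_cast; ring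
    have hlb : ∀ j' ∈ N, α * δ * (L:ℝ) ≤ ((contribution j' I : ℤ) : ℝ) := by
      intro j' hj'
      obtain ⟨hr, hd, hl, ht, hlen⟩ := facts j' hj'
      have hc1 : (min (jstar.d + 2*L) j'.d - max (jstar.r - 2*L) j'.r : ℤ)
          ≤ ((I ∩ j'.interval).card : ℤ) := by
        rw [hI, Job.interval, Finset.Ico_inter_Ico, Int.card_Ico]
        exact Int.self_le_toNat _
      have hc2 : (min (jstar.d + 2*L) j'.d - max (jstar.r - 2*L) j'.r : ℤ) - j'.lax
          ≤ contribution j' I := by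
        refine le_trans ?_ (le_max_right _ _)
        linarith
      have hlax' : (j'.lax : ℝ) = (j'.d : ℝ) - j'.r - j'.p := by
        unfold Job.lax; push_cast; ring
      have hl' : (j'.lax : ℝ) ≤ (L:ℝ) := by exact_mod_cast hl
      have hr' : (j'.r : ℝ) ≤ (jstar.r : ℝ) := by exact_mod_cast hr
      have hd' : (jstar.d : ℝ) ≤ (j'.d : ℝ) := by exact_mod_cast hd
      have ha2 : (jstar.d : ℝ) - jstar.r ≤ 2*(L:ℝ) := by exact_mod_cast hcase
      have hstar' : (jstar.r : ℝ) + 1 ≤ (jstar.d : ℝ) := by exact_mod_cast hstar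
      have hαδL : α * δ * (L:ℝ) ≤ (L:ℝ) := by
        have hh : (0:ℝ) ≤ (1 - α*δ) * (L:ℝ) :=
          mul_nonneg (by linarith) (by linarith)
        nlinarith [hh]
      have hgoal : α * δ * (L:ℝ)
          ≤ ((min (jstar.d + 2*L) j'.d - max (jstar.r - 2*L) j'.r : ℤ) : ℝ) - (j'.lax : ℝ) := by
        rcases le_total (jstar.r - 2*L) j'.r with h1 | h1 <;>
          rcases le_total (jstar.d + 2*L) j'.d with h2 | h2
        · have h1' : ((jstar.r : ℝ) - 2*L) ≤ (j'.r : ℝ) := by exact_mod_cast h1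
          have h2' : ((jstar.d : ℝ) + 2*L) ≤ (j'.d : ℝ) := by exact_mod_cast h2
          rw [max_eq_right h1, min_eq_left h2]
          push_cast
          linarith
        · have h1' : ((jstar.r : ℝ) - 2*L) ≤ (j'.r : ℝ) := by exact_mod_cast h1
          have h2' : (j'.d : ℝ) ≤ ((jstar.d : ℝ) + 2*L) := by exact_mod_cast h2
          rw [max_eq_right h1, min_eq_right h2]
          push_cast
          linarith [mul_lt_mul_of_pos_left hlen hα0]
        · have h1' : (j'.r : ℝ) ≤ ((jstar.r : ℝ) - 2*L) := by exact_mod_cast h1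
          have h2' : ((jstar.d : ℝ) + 2*L) ≤ (j'.d : ℝ) := by exact_mod_cast h2
          rw [max_eq_left h1, min_eq_left h2]
          push_cast
          linarith
        · have h1' : (j'.r : ℝ) ≤ ((jstar.r : ℝ) - 2*L) := by exact_mod_cast h1
          have h2' : (j'.d : ℝ) ≤ ((jstar.d : ℝ) + 2*L) := by exact_mod_cast h2
          rw [max_eq_left h1, min_eq_right h2]
          push_cast
          linarith
      have hc2' : ((min (jstar.d + 2*L) j'.d - max (jstar.r - 2*L) j'.r : ℤ) : ℝ) - (j'.lax : ℝ)
          ≤ ((contribution j' I : ℤ) : ℝ) := by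
        have : ((min (jstar.d + 2*L) j'.d - max (jstar.r - 2*L) j'.r : ℤ) - j'.lax : ℤ)
            ≤ contribution j' I := hc2
        exact_mod_cast this
      linarith
    have hkey := count_bound J m hJ hfeas I N hNJ (α * δ * (L:ℝ)) hlb
    have hIc : (I.card : ℝ) ≤ 6*(L:ℝ) := by
      rw [hIcard]
      have ha2 : (jstar.d : ℝ) - jstar.r ≤ 2*(L:ℝ) := by exact_mod_cast hcase
      linarith
    have hL0 : (0:ℝ) < (L:ℝ) := by linarith
    have h5 : (N.card : ℝ) * (α * δ) * (L:ℝ) ≤ 6*(m:ℝ)*(L:ℝ) := by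
      have hmI : (m:ℝ) * (I.card : ℝ) ≤ (m:ℝ) * (6*(L:ℝ)) :=
        mul_le_mul_of_nonneg_left hIc hm0
      linarith [hkey, hmI]
    have h6 : (N.card : ℝ) * (α * δ) ≤ 6*(m:ℝ) :=
      le_of_mul_le_mul_right (by linarith) hL0
    have h7 : (N.card : ℝ) ≤ 16 * (m:ℝ) / (α * δ) := by
      rw [le_div_iff₀ (mul_pos hα0 hδ0)]
      linarith
    have h8 : (0:ℝ) ≤ (m:ℝ)/α := by positivity
    linarith
  · -- large j* interval: use I = I(j*)
    push_neg at hcase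
    set I : Finset ℤ := jstar.interval with hI
    have hIcard : (I.card : ℝ) = (jstar.d : ℝ) - jstar.r := by
      have hnn : (0:ℤ) ≤ jstar.d - jstar.r := by linarith
      have h : (I.card : ℤ) = jstar.d - jstar.r := by
        rw [hI, Job.interval, Int.card_Ico]; exact Int.toNat_of_nonneg hnn
      have h' : (I.card : ℝ) = ((jstar.d - jstar.r : ℤ) : ℝ) := by exact_mod_cast h
      rw [h']; push_cast; ring
    have hstar' : (jstar.r : ℝ) + 1 ≤ (jstar.d : ℝ) := by exact_mod_cast hstar
    have ha2 : 2*(L:ℝ) < (jstar.d : ℝ) - jstar.r := by exact_mod_cast hcase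
    have hlb : ∀ j' ∈ N, ((jstar.d : ℝ) - jstar.r)/2 ≤ ((contribution j' I : ℤ) : ℝ) := by
      intro j' hj'
      have hj'S : j' ∈ S := (Finset.mem_filter.mp hj').1
      have hsubi := (hdom j' hj'S).1
      have hinter : I ∩ j'.interval = I := by
        rw [Finset.inter_eq_left]; exact hsubi
      have hl : j'.lax ≤ L := hmax j' hj'S
      have hl' : (j'.lax : ℝ) ≤ (L:ℝ) := by exact_mod_cast hl
      have hc2 : ((I.card : ℤ) - j'.lax : ℤ) ≤ contribution j' I := by
        unfold contribution
        rw [hinter]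
        exact le_max_right _ _
      have hc2' : (I.card : ℝ) - (j'.lax : ℝ) ≤ ((contribution j' I : ℤ) : ℝ) := by
        exact_mod_cast hc2
      rw [hIcard] at hc2'
      linarith
    have hkey := count_bound J m hJ hfeas I N hNJ (((jstar.d : ℝ) - jstar.r)/2) hlb
    rw [hIcard] at hkey
    have ha0 : (0:ℝ) < (jstar.d : ℝ) - jstar.r := by linarith
    have h6 : (N.card : ℝ) ≤ 2*(m:ℝ) := by
      by_contra hcon
      push_neg at hcon
      have := mul_lt_mul_of_pos_right hcon (by linarith : (0:ℝ) < ((jstar.d : ℝ) - jstar.r)/2)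
      nlinarith [hkey]
    have hNnn : (0:ℝ) ≤ (N.card : ℝ) := Nat.cast_nonneg _
    have h7 : (N.card : ℝ) ≤ 16 * (m:ℝ) / (α * δ) := by
      rw [le_div_iff₀ (mul_pos hα0 hδ0)]
      nlinarith [mul_le_mul_of_nonneg_left hαδ.le hNnn]
    have h8 : (0:ℝ) ≤ (m:ℝ)/α := by positivity
    linarith
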